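/- Definability of functions out of diamond-free types: suppose A and B are LFPL types such that A is diamond-free and every element b ∈ ⟦B⟧ is definable by a closed term M_b : B with ⟦M_b⟧ = b. Then for every function f : ⟦A⟧ → ⟦B⟧ there exists a closed LFPL term M_f : A ⊸ B such that ⟦M_f⟧ under the empty environment equals f. -/

import Mathlib

/-! # LFPL: syntax and denotational semantics -/

/-- LFPL types: diamond, unit, sums, tensor products, linear functions, lists. -/
inductive Tp : Type
  | dia : Tp
  | unit : Tp
  | sum (A B : Tp) : Tp
  | tens (A B : Tp) : Tp
  | arr (A B : Tp) : Tp
  | list (A : Tp) : Tp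

/-- Typing contexts: a list of declarations; `none` marks an unusable slot
(used for context splitting in the affine type system). -/
abbrev Ctx := List (Option Tp)

/-- De Bruijn variable lookup. -/
inductive Lk : Ctx → Tp → Type
  | here {A : Tp} {G : Ctx} : Lk (some A :: G) A
  | there {o : Option Tp} {A : Tp} {G : Ctx} : Lk G A → Lk (o :: G) A

/-- Splitting a context into two halves (each declared variable is usable
in exactly one half): this enforces the affine discipline. -/
inductive Split : Ctx → Ctx → Ctx → Type
  | nil : Split [] [] []
  | skip {G G1 G2} : Split G G1 G2 → Split (none :: G) (none :: G1) (none :: G2)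
  | left {A : Tp} {G G1 G2} : Split G G1 G2 → Split (some A :: G) (some A :: G1) (none :: G2)
  | right {A : Tp} {G G1 G2} : Split G G1 G2 → Split (some A :: G) (none :: G1) (some A :: G2)

/-- Intrinsically typed LFPL terms: `Term G A` are the terms `M` with `G ⊢ M : A`. -/
inductive Term : Ctx → Tp → Type
  | var {G A} : Lk G A → Term G A
  | null {G} : Term G .unit
  | inj1 {G A B} : Term G A → Term G (.sum A B)
  | inj2 {G A B} : Term G B → Term G (.sum A B)
  | scase {G G1 G2 A B C} : Split G G1 G2 → Term G1 (.sum A B) →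
      Term (some A :: G2) C → Term (some B :: G2) C → Term G C
  | pair {G G1 G2 A B} : Split G G1 G2 → Term G1 A → Term G2 B → Term G (.tens A B)
  | letp {G G1 G2 A B C} : Split G G1 G2 → Term G1 (.tens A B) →
      Term (some B :: some A :: G2) C → Term G C
  | lam {G A B} : Term (some A :: G) B → Term G (.arr A B)
  | app {G G1 G2 A B} : Split G G1 G2 → Term G1 (.arr A B) → Term G2 A → Term G B
  | nil {G A} : Term G (.list A)
  | cons {G G1 G23 G2 G3 A} : Split G G1 G23 → Split G23 G2 G3 →
      Term G1 .dia → Term G2 A → Term G3 (.list A) → Term G (.list A)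
  | lrec {G G1 G2 A B} : Split G G1 G2 → Term G1 (.list A) → Term G2 B →
      Term [some B, some A, some .dia] B → Term G B

/-- Set-theoretic denotational semantics of types. -/
def Tp.sem : Tp → Type
  | .dia => Unit
  | .unit => Unit
  | .sum A B => A.sem ⊕ B.sem
  | .tens A B => A.sem × B.sem
  | .arr A B => A.sem → B.sem
  | .list A => List A.sem

/-- Denotation of contexts (environments of semantic values). -/
def CtxSem : Ctx → Type
  | [] => PUnit
  | some A :: G => Tp.sem A × CtxSem G
  | none :: G => CtxSem G

def Lk.sem : {G : Ctx} → {A : Tp} → Lk G A → CtxSem G → Tp.sem A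
  | some _ :: _, _, .here, η => η.1
  | some _ :: _, _, .there l, η => Lk.sem l η.2
  | none :: _, _, .there l, η => Lk.sem l η

def Split.sub1 : {G G1 G2 : Ctx} → Split G G1 G2 → CtxSem G → CtxSem G1
  | _, _, _, .nil, _ => PUnit.unit
  | _, _, _, .skip s, η => s.sub1 η
  | _, _, _, .left s, η => (η.1, s.sub1 η.2)
  | _, _, _, .right s, η => s.sub1 η.2

def Split.sub2 : {G G1 G2 : Ctx} → Split G G1 G2 → CtxSem G → CtxSem G2
  | _, _, _, .nil, _ => PUnit.unit
  | _, _, _, .skip s, η => s.sub2 η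
  | _, _, _, .left s, η => s.sub2 η.2
  | _, _, _, .right s, η => (η.1, s.sub2 η.2)

/-- Denotational semantics of terms.  The `cons` case ignores its diamond
argument, and the list recursor is interpreted by iteration over sequences. -/
def Term.sem : {G : Ctx} → {A : Tp} → Term G A → CtxSem G → Tp.sem A
  | _, _, .var l, η => l.sem η
  | _, _, .null, _ => ()
  | _, _, .inj1 M, η => Sum.inl (M.sem η)
  | _, _, .inj2 M, η => Sum.inr (M.sem η)
  | _, _, .scase s M N1 N2, η =>
      match M.sem (s.sub1 η) with
      | Sum.inl a => N1.sem (a, s.sub2 η)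
      | Sum.inr b => N2.sem (b, s.sub2 η)
  | _, _, .pair s M1 M2, η => (M1.sem (s.sub1 η), M2.sem (s.sub2 η))
  | _, _, .letp s M N, η => N.sem ((M.sem (s.sub1 η)).2, ((M.sem (s.sub1 η)).1, s.sub2 η))
  | _, _, .lam M, η => fun a => M.sem (a, η)
  | _, _, .app s M N, η => M.sem (s.sub1 η) (N.sem (s.sub2 η))
  | _, _, .nil, _ => []
  | _, _, .cons s1 s2 _ Mh Mt, η =>
      Mh.sem (s2.sub1 (s1.sub2 η)) :: Mt.sem (s2.sub2 (s1.sub2 η))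
  | _, _, .lrec s M N1 N2, η =>
      (M.sem (s.sub1 η)).foldr (fun a b => N2.sem (b, (a, ((), PUnit.unit)))) (N1.sem (s.sub2 η))

/-- Diamond-free types. -/
inductive DFree : Tp → Prop
  | unit : DFree .unit
  | sum {A B : Tp} : DFree A → DFree B → DFree (.sum A B)
  | tens {A B : Tp} : DFree A → DFree B → DFree (.tens A B)

/-! ## Weakening (context embeddings) -/

inductive Emb : Ctx → Ctx → Type
  | nil : Emb [] []
  | keep {o G G'} : Emb G G' → Emb (o :: G) (o :: G')
  | ins (o) {G G'} : Emb G G' → Emb G (o :: G')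

def Emb.sem : {G G' : Ctx} → Emb G G' → CtxSem G' → CtxSem G
  | _, _, .nil, _ => PUnit.unit
  | _, _, .keep (o := some _) e, η => (η.1, e.sem η.2)
  | _, _, .keep (o := none) e, η => e.sem η
  | _, _, .ins (some _) e, η => e.sem η.2
  | _, _, .ins none e, η => e.sem η

def Lk.ren : {G G' : Ctx} → {A : Tp} → Emb G G' → Lk G A → Lk G' A
  | _, _, _, .keep _, .here => .here
  | _, _, _, .keep e, .there l => .there (l.ren e)
  | _, _, _, .ins _ e, l => .there (l.ren e)

theorem Lk.ren_sem : {G G' : Ctx} → {A : Tp} → (e : Emb G G') → (l : Lk G A) →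
    (η : CtxSem G') → (l.ren e).sem η = l.sem (e.sem η)
  | _, _, _, .keep (o := some _) _, .here, η => rfl
  | _, _, _, .keep (o := some _) e, .there l, η => Lk.ren_sem e l η.2
  | _, _, _, .keep (o := none) e, .there l, η => Lk.ren_sem e l η
  | _, _, _, .ins (some _) e, l, η => Lk.ren_sem e l η.2
  | _, _, _, .ins none e, l, η => Lk.ren_sem e l η

def Emb.split : {G G' G1 G2 : Ctx} → Emb G G' → Split G G1 G2 →
    Σ G1' G2', Split G' G1' G2' × Emb G1 G1' × Emb G2 G2'
  | _, _, _, _, .nil, .nil => ⟨[], [], .nil, .nil, .nil⟩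
  | _, _, _, _, .keep e, .skip s =>
      let ⟨_, _, s', e1, e2⟩ := e.split s
      ⟨_, _, .skip s', .keep e1, .keep e2⟩
  | _, _, _, _, .keep e, .left s =>
      let ⟨_, _, s', e1, e2⟩ := e.split s
      ⟨_, _, .left s', .keep e1, .keep e2⟩
  | _, _, _, _, .keep e, .right s =>
      let ⟨_, _, s', e1, e2⟩ := e.split s
      ⟨_, _, .right s', .keep e1, .keep e2⟩
  | _, _, _, _, .ins (some A) e, s =>
      let ⟨_, _, s', e1, e2⟩ := e.split s
      ⟨_, _, .left s', .ins (some A) e1, .ins none e2⟩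
  | _, _, _, _, .ins none e, s =>
      let ⟨_, _, s', e1, e2⟩ := e.split s
      ⟨_, _, .skip s', .ins none e1, .ins none e2⟩

theorem Emb.split_sem : {G G' G1 G2 : Ctx} → (e : Emb G G') → (s : Split G G1 G2) →
    (η : CtxSem G') →
    (e.split s).2.2.2.1.sem ((e.split s).2.2.1.sub1 η) = s.sub1 (e.sem η) ∧
    (e.split s).2.2.2.2.sem ((e.split s).2.2.1.sub2 η) = s.sub2 (e.sem η)
  | _, _, _, _, .nil, .nil, _ => ⟨rfl, rfl⟩
  | _, _, _, _, .keep (o := none) e, .skip s, η => by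
      have := Emb.split_sem e s η
      simp only [Emb.split, Emb.sem, Split.sub1, Split.sub2]
      exact this
  | _, _, _, _, .keep (o := some _) e, .left s, η => by
      have := Emb.split_sem e s η.2
      simp only [Emb.split, Emb.sem, Split.sub1, Split.sub2]
      exact ⟨congrArg _ this.1, this.2⟩
  | _, _, _, _, .keep (o := some _) e, .right s, η => by
      have := Emb.split_sem e s η.2
      simp only [Emb.split, Emb.sem, Split.sub1, Split.sub2]
      exact ⟨this.1, congrArg _ this.2⟩
  | _, _, _, _, .ins (some _) e, s, η => by
      have := Emb.split_sem e s η.2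
      simp only [Emb.split, Emb.sem, Split.sub1, Split.sub2]
      exact this
  | _, _, _, _, .ins none e, s, η => by
      have := Emb.split_sem e s η
      simp only [Emb.split, Emb.sem, Split.sub1, Split.sub2]
      exact this

def Term.ren : {G G' : Ctx} → {A : Tp} → Emb G G' → Term G A → Term G' A
  | _, _, _, e, .var l => .var (l.ren e)
  | _, _, _, _, .null => .null
  | _, _, _, e, .inj1 M => .inj1 (M.ren e)
  | _, _, _, e, .inj2 M => .inj2 (M.ren e)
  | _, _, _, e, .scase s M N1 N2 =>
      let r := e.split s
      .scase r.2.2.1 (M.ren r.2.2.2.1) (N1.ren r.2.2.2.2.keep) (N2.ren r.2.2.2.2.keep)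
  | _, _, _, e, .pair s M1 M2 =>
      let r := e.split s
      .pair r.2.2.1 (M1.ren r.2.2.2.1) (M2.ren r.2.2.2.2)
  | _, _, _, e, .letp s M N =>
      let r := e.split s
      .letp r.2.2.1 (M.ren r.2.2.2.1) (N.ren r.2.2.2.2.keep.keep)
  | _, _, _, e, .lam M => .lam (M.ren e.keep)
  | _, _, _, e, .app s M N =>
      let r := e.split s
      .app r.2.2.1 (M.ren r.2.2.2.1) (N.ren r.2.2.2.2)
  | _, _, _, _, .nil => .nil
  | _, _, _, e, .cons s1 s2 Md Mh Mt =>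
      let r1 := e.split s1
      let r2 := r1.2.2.2.2.split s2
      .cons r1.2.2.1 r2.2.2.1 (Md.ren r1.2.2.2.1) (Mh.ren r2.2.2.2.1) (Mt.ren r2.2.2.2.2)
  | _, _, _, e, .lrec s M N1 N2 =>
      let r := e.split s
      .lrec r.2.2.1 (M.ren r.2.2.2.1) (N1.ren r.2.2.2.2) N2

theorem Term.ren_sem : {G G' : Ctx} → {A : Tp} → (e : Emb G G') → (M : Term G A) →
    (η : CtxSem G') → (M.ren e).sem η = M.sem (e.sem η)
  | _, _, _, e, .var l, η => Lk.ren_sem e l η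
  | _, _, _, _, .null, _ => rfl
  | _, _, _, e, .inj1 M, η => congrArg Sum.inl (Term.ren_sem e M η)
  | _, _, _, e, .inj2 M, η => congrArg Sum.inr (Term.ren_sem e M η)
  | _, _, _, e, .scase s M N1 N2, η => by
      have hs := Emb.split_sem e s η
      simp only [Term.ren, Term.sem, Term.ren_sem _ M, hs.1]
      cases M.sem (s.sub1 (e.sem η)) with
      | inl a =>
        simp only [Term.ren_sem _ N1, Emb.sem, hs.2]
        exact (Term.ren_sem _ N1 _).trans (by rw [← hs.2]; rfl)
      | inr b =>
        simp only [Term.ren_sem _ N2, Emb.sem, hs.2]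
        exact (Term.ren_sem _ N2 _).trans (by rw [← hs.2]; rfl)
  | _, _, _, e, .pair s M1 M2, η => by
      have hs := Emb.split_sem e s η
      simp only [Term.ren, Term.sem, Term.ren_sem _ M1, Term.ren_sem _ M2, hs.1, hs.2]
      rfl
  | _, _, _, e, .letp s M N, η => by
      have hs := Emb.split_sem e s η
      simp only [Term.ren, Term.sem, Term.ren_sem _ M, Term.ren_sem _ N, Emb.sem, hs.1, hs.2]
      exact (Term.ren_sem _ N _).trans (by rw [← hs.2]; rfl)
  | _, _, _, e, .lam M, η => by
      funext a
      exact Term.ren_sem e.keep M (a, η)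
  | _, _, _, e, .app s M N, η => by
      have hs := Emb.split_sem e s η
      simp only [Term.ren, Term.sem, Term.ren_sem _ M, Term.ren_sem _ N, hs.1, hs.2]
  | _, _, _, _, .nil, _ => rfl
  | _, _, _, e, .cons s1 s2 Md Mh Mt, η => by
      have h1 := Emb.split_sem e s1 η
      have h2 := Emb.split_sem (e.split s1).2.2.2.2 s2 ((e.split s1).2.2.1.sub2 η)
      simp only [Term.ren, Term.sem, Term.ren_sem _ Mh, Term.ren_sem _ Mt, h2.1, h2.2, h1.2]
      rfl
  | _, _, _, e, .lrec s M N1 N2, η => by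
      have hs := Emb.split_sem e s η
      simp only [Term.ren, Term.sem, Term.ren_sem _ M, Term.ren_sem _ N1, hs.1, hs.2]

/-- Embedding of the empty context into any context. -/
def Emb.fromNil : (G : Ctx) → Emb [] G
  | [] => .nil
  | o :: G => .ins o (Emb.fromNil G)

/-- Weakening a closed term to any context. -/
def Term.wk {A : Tp} (M : Term [] A) (G : Ctx) : Term G A :=
  M.ren (Emb.fromNil G)

theorem Term.wk_sem {A : Tp} (M : Term [] A) (G : Ctx) (η : CtxSem G) :
    (M.wk G).sem η = M.sem PUnit.unit := Term.ren_sem _ M η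

/-- Key lemma, with the target type universally quantified for the induction. -/
theorem dfree_key : ∀ {A : Tp}, DFree A → ∀ (B : Tp),
    (∀ b : B.sem, ∃ Mb : Term [] B, Mb.sem PUnit.unit = b) →
    ∀ f : A.sem → B.sem, ∃ Mf : Term [] (.arr A B), Mf.sem PUnit.unit = f := by
  intro A hA
  induction hA with
  | unit =>
      intro B hB f
      obtain ⟨Mb, hMb⟩ := hB (f ())
      refine ⟨.lam (Mb.wk [some .unit]), ?_⟩
      funext a
      cases a
      simp only [Term.sem, Term.wk_sem, hMb]
      exact (Term.wk_sem Mb _ _).trans hMb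
  | sum hA1 hA2 ih1 ih2 =>
      intro B hB f
      obtain ⟨M1, hM1⟩ := ih1 B hB (fun a => f (Sum.inl a))
      obtain ⟨M2, hM2⟩ := ih2 B hB (fun a => f (Sum.inr a))
      refine ⟨.lam (.scase (.left .nil) (.var .here)
        (.app (.right (.skip .nil)) (M1.wk [none, none]) (.var .here))
        (.app (.right (.skip .nil)) (M2.wk [none, none]) (.var .here))), ?_⟩
      funext a
      cases a with
      | inl a1 =>
          simp only [Term.sem, Lk.sem, Split.sub1, Split.sub2, Term.wk_sem, hM1]
          exact congrFun ((Term.wk_sem M1 _ _).trans hM1) a1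
      | inr a2 =>
          simp only [Term.sem, Lk.sem, Split.sub1, Split.sub2, Term.wk_sem, hM2]
          exact congrFun ((Term.wk_sem M2 _ _).trans hM2) a2
  | tens hA1 hA2 ih1 ih2 =>
      rename_i A1 A2
      intro B hB f
      obtain ⟨M, hM⟩ := ih1 (.arr A2 B) (ih2 B hB) (fun a1 a2 => f (a1, a2))
      refine ⟨.lam (.letp (.left .nil) (.var .here)
        (.app (.right (.left (.skip .nil)))
          (.app (.skip (.right (.skip .nil))) (M.wk [none, none, none])
            (.var (.there .here)))
          (.var .here))), ?_⟩
      funext a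
      obtain ⟨a1, a2⟩ := a
      simp only [Term.sem, Lk.sem, Split.sub1, Split.sub2, Term.wk_sem, hM]
      exact congrFun (congrFun ((Term.wk_sem M _ _).trans hM) a1) a2

/-- **Definability of functions out of diamond-free types**: if `A` is
diamond-free and every element of `⟦B⟧` is definable by a closed term of type
`B`, then every function `f : ⟦A⟧ → ⟦B⟧` is the denotation of some closed term
`M_f : A ⊸ B`. -/
theorem dfree_function_definable {A B : Tp} (hA : DFree A)
    (hB : ∀ b : B.sem, ∃ Mb : Term [] B, Mb.sem PUnit.unit = b)
    (f : A.sem → B.sem) :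
    ∃ Mf : Term [] (.arr A B), Mf.sem PUnit.unit = f := by
  exact dfree_key hA B hB f
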